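/- Suppose Q is in rational normal form with parameters z and k_1,…,k_d, and γ is generic. Let α be a normalized 2-cocycle on g(γ,Q) and write α(m)=α(L_m,L_{−m}). Then for every m∈ℤ^d∖R, α(m)=((γ|m)/(γ|e_1))·σ(m,−m)·α(e_1). -/

import Mathlib

open scoped BigOperators

namespace QTorus

/-- σ(m,n) = ∏_{i<j} q_{ji}^{m_j n_i}. -/
noncomputable def qsigma (d : ℕ) (Q : Matrix (Fin d) (Fin d) ℂ) (m n : Fin d → ℤ) : ℂ :=
  ∏ i : Fin d, ∏ j : Fin d, if i < j then Q j i ^ (m j * n i) else 1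

/-- The radical subgroup R = {m | σ(m,n)=σ(n,m) for all n}. -/
def Rset (d : ℕ) (Q : Matrix (Fin d) (Fin d) ℂ) : Set (Fin d → ℤ) :=
  {m | ∀ n : Fin d → ℤ, qsigma d Q m n = qsigma d Q n m}

/-- (γ|m) = ∑ γ_i m_i. -/
noncomputable def ip (d : ℕ) (γ : Fin d → ℂ) (m : Fin d → ℤ) : ℂ :=
  ∑ i : Fin d, γ i * (m i : ℂ)

/-- The underlying vector space of g(γ,Q): formal ℂ-linear combinations of basis
vectors indexed by ℤ^d. -/
abbrev g (d : ℕ) := (Fin d → ℤ) →₀ ℂ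

/-- The basis vector L_m. -/
noncomputable def L (d : ℕ) (m : Fin d → ℤ) : g d := Finsupp.single m 1

/-- Hypotheses on the matrix Q: nonzero entries, q_{ii}=1, q_{ij}q_{ji}=1. -/
def QOk (d : ℕ) (Q : Matrix (Fin d) (Fin d) ℂ) : Prop :=
  (∀ i, Q i i = 1) ∧ (∀ i j, Q i j * Q j i = 1) ∧ (∀ i j, Q i j ≠ 0)

/-- γ is generic: γ_1,…,γ_d are linearly independent over ℚ. -/
def Generic (d : ℕ) (γ : Fin d → ℂ) : Prop := LinearIndependent ℚ γ

open Classical in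
/-- Structure constants of g(γ,Q): [L_m, L_n] = sc(m,n) • L_{m+n}. -/
noncomputable def sc (d : ℕ) (Q : Matrix (Fin d) (Fin d) ℂ) (γ : Fin d → ℂ)
    (m n : Fin d → ℤ) : ℂ :=
  if m ∈ Rset d Q then
    (if n ∈ Rset d Q then qsigma d Q m n * ip d γ (n - m)
     else qsigma d Q m n * ip d γ n)
  else
    (if n ∈ Rset d Q then -(qsigma d Q n m * ip d γ m)
     else qsigma d Q m n - qsigma d Q n m)

/-- The bracket of g(γ,Q), as the bilinear extension of
[L_m, L_n] = sc(m,n) • L_{m+n}. -/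
noncomputable def br (d : ℕ) (Q : Matrix (Fin d) (Fin d) ℂ) (γ : Fin d → ℂ)
    (x y : g d) : g d :=
  x.sum fun m a => y.sum fun n b => Finsupp.single (m + n) (a * b * sc d Q γ m n)

/-- A Lie algebra automorphism of g(γ,Q): a linear equivalence preserving the bracket. -/
def IsAut (d : ℕ) (Q : Matrix (Fin d) (Fin d) ℂ) (γ : Fin d → ℂ)
    (θ : g d ≃ₗ[ℂ] g d) : Prop :=
  ∀ x y : g d, θ (br d Q γ x y) = br d Q γ (θ x) (θ y)

/-- A derivation of g(γ,Q). -/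
def IsDer (d : ℕ) (Q : Matrix (Fin d) (Fin d) ℂ) (γ : Fin d → ℂ)
    (D : g d →ₗ[ℂ] g d) : Prop :=
  ∀ x y : g d, D (br d Q γ x y) = br d Q γ (D x) y + br d Q γ x (D y)

open Classical in
/-- δ(n,R) = 1 if n ∈ R, 0 otherwise. -/
noncomputable def deltaR (d : ℕ) (Q : Matrix (Fin d) (Fin d) ℂ) (n : Fin d → ℤ) : ℕ :=
  if n ∈ Rset d Q then 1 else 0

/-- A 2-cocycle on g(γ,Q). -/
def IsCocycle (d : ℕ) (Q : Matrix (Fin d) (Fin d) ℂ) (γ : Fin d → ℂ)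
    (α : g d →ₗ[ℂ] g d →ₗ[ℂ] ℂ) : Prop :=
  (∀ x y : g d, α x y = - α y x) ∧
  (∀ x y z : g d,
    α (br d Q γ x y) z + α (br d Q γ z x) y + α (br d Q γ y z) x = 0)

/-- i ↔ j is one of the exceptional index pairs (2l-1,2l) (1-based) of the rational
normal form. Here indices are 0-based. -/
def OffDiagPair (z : ℕ) (i j : ℕ) : Prop :=
  ∃ l : ℕ, l < z ∧ ((i = 2 * l ∧ j = 2 * l + 1) ∨ (i = 2 * l + 1 ∧ j = 2 * l))

/-- Q is in rational normal form with parameters z and k_1,…,k_d (0-based indexing: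
the paper's pair (2i-1,2i) is the Lean pair (2l, 2l+1) with l = i-1). -/
def IsRNF (d : ℕ) (Q : Matrix (Fin d) (Fin d) ℂ) (z : ℕ) (k : Fin d → ℕ) : Prop :=
  0 < z ∧ 2 * z ≤ d ∧
  (∀ i j : Fin d, ¬ OffDiagPair z i.val j.val → Q i j = 1) ∧
  (∀ (l : ℕ) (_ : l < z) (hi : 2 * l < d) (hj : 2 * l + 1 < d),
      IsPrimitiveRoot (Q ⟨2 * l, hi⟩ ⟨2 * l + 1, hj⟩) (k ⟨2 * l, hi⟩) ∧
      Q ⟨2 * l + 1, hj⟩ ⟨2 * l, hi⟩ = (Q ⟨2 * l, hi⟩ ⟨2 * l + 1, hj⟩)⁻¹ ∧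
      k ⟨2 * l + 1, hj⟩ = k ⟨2 * l, hi⟩ ∧
      1 < k ⟨2 * l, hi⟩) ∧
  (∀ (i : ℕ) (_ : i + 1 < 2 * z) (h1 : i < d) (h2 : i + 1 < d),
      k ⟨i + 1, h2⟩ ∣ k ⟨i, h1⟩) ∧
  (∀ i : Fin d, 2 * z ≤ i.val → k i = 1)

/-- The vector k_1 e_1 ∈ ℤ^d. -/
noncomputable def k1e1 (d : ℕ) (k : Fin d → ℕ) (hd : 0 < d) : Fin d → ℤ :=
  Pi.single ⟨0, hd⟩ (k ⟨0, hd⟩ : ℤ)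

/-- A 2-cocycle is normalized if α(L_{m-k₁e₁}, L_{k₁e₁})=0 for m ∈ R, m ≠ 2k₁e₁,
α(L_0, L_{2k₁e₁})=0, α(L_0, L_s)=0 for s ∉ R, and α(L_m,L_n)=0 whenever m+n ≠ 0. -/
def IsNormalized (d : ℕ) (Q : Matrix (Fin d) (Fin d) ℂ) (k : Fin d → ℕ) (hd : 0 < d)
    (α : g d →ₗ[ℂ] g d →ₗ[ℂ] ℂ) : Prop :=
  (∀ m ∈ Rset d Q, m ≠ 2 • k1e1 d k hd →
      α (L d (m - k1e1 d k hd)) (L d (k1e1 d k hd)) = 0) ∧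
  α (L d 0) (L d (2 • k1e1 d k hd)) = 0 ∧
  (∀ s, s ∉ Rset d Q → α (L d 0) (L d s) = 0) ∧
  (∀ m n : Fin d → ℤ, m + n ≠ 0 → α (L d m) (L d n) = 0)

/-- The degree derivation ∂_i, acting by ∂_i(L_m) = m_i L_m. -/
noncomputable def deg (d : ℕ) (i : Fin d) (y : g d) : g d :=
  y.sum fun m a => Finsupp.single m ((m i : ℂ) * a)

open Classical in
/-- The 2-cocycle α₁: α₁(L_m,L_n) = δ_{m+n,0}((m_γ)³-m_γ)/12 for m ∈ R, 0 otherwise,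
where m_γ = (γ|m)/(γ|k₁e₁). -/
noncomputable def alpha1 (d : ℕ) (Q : Matrix (Fin d) (Fin d) ℂ) (γ : Fin d → ℂ)
    (k : Fin d → ℕ) (hd : 0 < d) (x y : g d) : ℂ :=
  x.sum fun m a => y.sum fun n b => a * b *
    (if m ∈ Rset d Q ∧ m + n = 0 then
       ((ip d γ m / ip d γ (k1e1 d k hd)) ^ 3 - ip d γ m / ip d γ (k1e1 d k hd)) / 12
     else 0)

open Classical in
/-- The 2-cocycle α₂: α₂(L_r,L_s) = δ_{r+s,0} σ(r,-r)(γ|r)/(γ|k₁e₁) for r ∉ R,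
0 otherwise. -/
noncomputable def alpha2 (d : ℕ) (Q : Matrix (Fin d) (Fin d) ℂ) (γ : Fin d → ℂ)
    (k : Fin d → ℕ) (hd : 0 < d) (x y : g d) : ℂ :=
  x.sum fun m a => y.sum fun n b => a * b *
    (if m ∉ Rset d Q ∧ m + n = 0 then
       qsigma d Q m (-m) * (ip d γ m / ip d γ (k1e1 d k hd))
     else 0)

section Aux
variable {d : ℕ} {Q : Matrix (Fin d) (Fin d) ℂ}

section basic

lemma qsigma_add_left (hQ0 : ∀ i j, Q i j ≠ 0) (m m' n : Fin d → ℤ) :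
    qsigma d Q (m + m') n = qsigma d Q m n * qsigma d Q m' n := by
  simp only [qsigma, ← Finset.prod_mul_distrib]
  refine Finset.prod_congr rfl fun i _ => ?_
  refine Finset.prod_congr rfl fun j _ => ?_
  split
  · rw [Pi.add_apply, add_mul, zpow_add₀ (hQ0 j i)]
  · rw [one_mul]

lemma qsigma_add_right (hQ0 : ∀ i j, Q i j ≠ 0) (m n n' : Fin d → ℤ) :
    qsigma d Q m (n + n') = qsigma d Q m n * qsigma d Q m n' := by
  simp only [qsigma, ← Finset.prod_mul_distrib]
  refine Finset.prod_congr rfl fun i _ => ?_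
  refine Finset.prod_congr rfl fun j _ => ?_
  split
  · rw [Pi.add_apply, mul_add, zpow_add₀ (hQ0 j i)]
  · rw [one_mul]

lemma qsigma_zero_left (n : Fin d → ℤ) : qsigma d Q 0 n = 1 := by
  simp [qsigma]

lemma qsigma_zero_right (m : Fin d → ℤ) : qsigma d Q m 0 = 1 := by
  simp [qsigma]

lemma qsigma_ne_zero (hQ0 : ∀ i j, Q i j ≠ 0) (m n : Fin d → ℤ) : qsigma d Q m n ≠ 0 := by
  refine Finset.prod_ne_zero_iff.2 fun i _ => Finset.prod_ne_zero_iff.2 fun j _ => ?_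
  split
  · exact zpow_ne_zero _ (hQ0 j i)
  · exact one_ne_zero

lemma qsigma_neg_left (hQ0 : ∀ i j, Q i j ≠ 0) (m n : Fin d → ℤ) :
    qsigma d Q (-m) n = (qsigma d Q m n)⁻¹ := by
  have := qsigma_add_left hQ0 m (-m) n
  rw [add_neg_cancel, qsigma_zero_left] at this
  exact (inv_eq_of_mul_eq_one_right this.symm).symm

lemma qsigma_neg_right (hQ0 : ∀ i j, Q i j ≠ 0) (m n : Fin d → ℤ) :
    qsigma d Q m (-n) = (qsigma d Q m n)⁻¹ := by
  have := qsigma_add_right hQ0 m n (-n)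
  rw [add_neg_cancel, qsigma_zero_right] at this
  exact (inv_eq_of_mul_eq_one_right this.symm).symm

lemma qsigma_neg_neg (m n : Fin d → ℤ) :
    qsigma d Q (-m) n = qsigma d Q m (-n) := by
  unfold qsigma
  refine Finset.prod_congr rfl fun i _ => Finset.prod_congr rfl fun j _ => ?_
  split
  · congr 1; simp only [Pi.neg_apply]; ring
  · rfl

lemma qsigma_neg_self (m : Fin d → ℤ) :
    qsigma d Q (-m) m = qsigma d Q m (-m) := by
  rw [qsigma_neg_neg]

lemma Rset_zero : (0 : Fin d → ℤ) ∈ Rset d Q := by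
  intro n; rw [qsigma_zero_left, qsigma_zero_right]

lemma Rset_add (hQ0 : ∀ i j, Q i j ≠ 0) {a b : Fin d → ℤ} (ha : a ∈ Rset d Q) (hb : b ∈ Rset d Q) :
    a + b ∈ Rset d Q := by
  intro n
  rw [qsigma_add_left hQ0, qsigma_add_right hQ0, ha n, hb n]

lemma Rset_neg (hQ0 : ∀ i j, Q i j ≠ 0) {a : Fin d → ℤ} (ha : a ∈ Rset d Q) : -a ∈ Rset d Q := by
  intro n
  rw [qsigma_neg_left hQ0, qsigma_neg_right hQ0, ha n]

lemma not_mem_add (hQ0 : ∀ i j, Q i j ≠ 0) {r t : Fin d → ℤ} (hr : r ∉ Rset d Q) (ht : t ∈ Rset d Q) :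
    r + t ∉ Rset d Q := by
  intro h
  exact hr (by simpa using Rset_add hQ0 h (Rset_neg hQ0 ht))

end basic

section single

lemma qsigma_single_right (m : Fin d → ℤ) (a : Fin d) (c : ℤ) :
    qsigma d Q m (Pi.single a c) = ∏ j, if a < j then Q j a ^ (m j * c) else 1 := by
  unfold qsigma
  rw [Finset.prod_eq_single a]
  · refine Finset.prod_congr rfl fun j _ => ?_
    rw [Pi.single_eq_same]
  · intro i _ hi
    refine Finset.prod_eq_one fun j _ => ?_
    rw [Pi.single_eq_of_ne hi, mul_zero, zpow_zero, ite_self]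
  · intro h; exact absurd (Finset.mem_univ a) h

lemma qsigma_single_left (n : Fin d → ℤ) (a : Fin d) (c : ℤ) :
    qsigma d Q (Pi.single a c) n = ∏ i, if i < a then Q a i ^ (c * n i) else 1 := by
  unfold qsigma
  refine Finset.prod_congr rfl fun i _ => ?_
  rw [Finset.prod_eq_single a]
  · rw [Pi.single_eq_same]
  · intro j _ hj
    rw [Pi.single_eq_of_ne hj, zero_mul, zpow_zero, ite_self]
  · intro h; exact absurd (Finset.mem_univ a) h

end single

section rnf

variable {z : ℕ} {k : Fin d → ℕ}

lemma pair_cases (hRNF : IsRNF d Q z k) (i j : Fin d) (hij : i < j) :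
    Q j i = 1 ∨ ∃ l, l < z ∧ (i : ℕ) = 2 * l ∧ (j : ℕ) = 2 * l + 1 := by
  by_cases h : OffDiagPair z j.val i.val
  · obtain ⟨l, hl, h | h⟩ := h
    · exact absurd (Fin.lt_def.1 hij) (by omega)
    · exact Or.inr ⟨l, hl, h.2, h.1⟩
  · exact Or.inl (hRNF.2.2.1 j i h)

lemma qsigma_right_a (hRNF : IsRNF d Q z k) {l : ℕ} (hl : l < z)
    (ha : 2 * l < d) (hb : 2 * l + 1 < d) (m : Fin d → ℤ) (c : ℤ) :
    qsigma d Q m (Pi.single ⟨2 * l, ha⟩ c) =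
      Q ⟨2 * l + 1, hb⟩ ⟨2 * l, ha⟩ ^ (m ⟨2 * l + 1, hb⟩ * c) := by
  rw [qsigma_single_right]
  rw [Finset.prod_eq_single (⟨2 * l + 1, hb⟩ : Fin d)]
  · rw [if_pos (by simp [Fin.lt_def])]
  · intro j _ hj
    split
    · rename_i hlt
      have h1 : Q j ⟨2 * l, ha⟩ = 1 := by
        refine hRNF.2.2.1 _ _ ?_
        rintro ⟨l', hl', ⟨h1, h2⟩ | ⟨h1, h2⟩⟩
        · simp only [Fin.lt_def, Fin.val_mk] at hlt h1 h2
          have := Fin.val_ne_of_ne hj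
          simp only [Fin.val_mk] at this
          omega
        · exfalso; apply hj; apply Fin.ext
          simp only [Fin.val_mk] at h1 h2 ⊢
          omega
      rw [h1, one_zpow]
    · rfl
  · intro h; exact absurd (Finset.mem_univ _) h

lemma qsigma_left_a (hRNF : IsRNF d Q z k) {l : ℕ} (hl : l < z)
    (ha : 2 * l < d) (n : Fin d → ℤ) (c : ℤ) :
    qsigma d Q (Pi.single ⟨2 * l, ha⟩ c) n = 1 := by
  rw [qsigma_single_left]
  refine Finset.prod_eq_one fun i _ => ?_
  split
  · rename_i hlt
    have h1 : Q ⟨2 * l, ha⟩ i = 1 := by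
      refine hRNF.2.2.1 _ _ ?_
      rintro ⟨l', hl', ⟨h1, h2⟩ | ⟨h1, h2⟩⟩ <;>
        simp only [Fin.lt_def] at hlt <;> simp at h1 h2 <;> omega
    rw [h1, one_zpow]
  · rfl

lemma qsigma_right_b (hRNF : IsRNF d Q z k) {l : ℕ} (hl : l < z)
    (hb : 2 * l + 1 < d) (m : Fin d → ℤ) (c : ℤ) :
    qsigma d Q m (Pi.single ⟨2 * l + 1, hb⟩ c) = 1 := by
  rw [qsigma_single_right]
  refine Finset.prod_eq_one fun j _ => ?_
  split
  · rename_i hlt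
    have h1 : Q j ⟨2 * l + 1, hb⟩ = 1 := by
      refine hRNF.2.2.1 _ _ ?_
      rintro ⟨l', hl', ⟨h1, h2⟩ | ⟨h1, h2⟩⟩ <;>
        simp only [Fin.lt_def] at hlt <;> simp at h1 h2 <;> omega
    rw [h1, one_zpow]
  · rfl

lemma qsigma_left_b (hRNF : IsRNF d Q z k) {l : ℕ} (hl : l < z)
    (ha : 2 * l < d) (hb : 2 * l + 1 < d) (n : Fin d → ℤ) (c : ℤ) :
    qsigma d Q (Pi.single ⟨2 * l + 1, hb⟩ c) n =
      Q ⟨2 * l + 1, hb⟩ ⟨2 * l, ha⟩ ^ (c * n ⟨2 * l, ha⟩) := by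
  rw [qsigma_single_left]
  rw [Finset.prod_eq_single (⟨2 * l, ha⟩ : Fin d)]
  · rw [if_pos (by simp [Fin.lt_def])]
  · intro i _ hi
    split
    · rename_i hlt
      have h1 : Q ⟨2 * l + 1, hb⟩ i = 1 := by
        refine hRNF.2.2.1 _ _ ?_
        rintro ⟨l', hl', ⟨h1, h2⟩ | ⟨h1, h2⟩⟩
        · simp only [Fin.lt_def] at hlt; simp at h1 h2; omega
        · simp only [Fin.lt_def] at hlt
          have := Fin.val_ne_of_ne hi
          simp at h1 h2 this
          omega
      rw [h1, one_zpow]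
    · rfl
  · intro h; exact absurd (Finset.mem_univ _) h

lemma mem_R_dvd (hRNF : IsRNF d Q z k) {t : Fin d → ℤ} (ht : t ∈ Rset d Q)
    {l : ℕ} (hl : l < z) (ha : 2 * l < d) (hb : 2 * l + 1 < d) :
    (k ⟨2 * l, ha⟩ : ℤ) ∣ t ⟨2 * l, ha⟩ ∧ (k ⟨2 * l, ha⟩ : ℤ) ∣ t ⟨2 * l + 1, hb⟩ := by
  obtain ⟨hprim, hinv, -, -⟩ := hRNF.2.2.2.1 l hl ha hb
  have key : ∀ c : ℤ, Q ⟨2 * l + 1, hb⟩ ⟨2 * l, ha⟩ ^ c = 1 ↔ (k ⟨2 * l, ha⟩ : ℤ) ∣ c := by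
    intro c
    rw [hinv, inv_zpow, inv_eq_one]
    exact hprim.zpow_eq_one_iff_dvd c
  constructor
  · have h := ht (Pi.single ⟨2 * l + 1, hb⟩ 1)
    rw [qsigma_right_b hRNF hl hb, qsigma_left_b hRNF hl ha hb] at h
    rw [← key]
    rw [one_mul] at h
    exact h.symm
  · have h := ht (Pi.single ⟨2 * l, ha⟩ 1)
    rw [qsigma_right_a hRNF hl ha hb, qsigma_left_a hRNF hl ha] at h
    rw [← key]
    rw [mul_one] at h
    exact h

lemma R_sigma_one (hRNF : IsRNF d Q z k) {t : Fin d → ℤ} (ht : t ∈ Rset d Q)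
    (n : Fin d → ℤ) : qsigma d Q t n = 1 ∧ qsigma d Q n t = 1 := by
  constructor <;>
  · refine Finset.prod_eq_one fun i _ => Finset.prod_eq_one fun j _ => ?_
    split
    · rename_i hij
      rcases pair_cases hRNF i j hij with h1 | ⟨l, hl, hi, hj⟩
      · rw [h1, one_zpow]
      · have ha : 2 * l < d := by omega
        have hb : 2 * l + 1 < d := by omega
        have hi' : i = ⟨2 * l, ha⟩ := Fin.ext hi
        have hj' : j = ⟨2 * l + 1, hb⟩ := Fin.ext hj
        subst hi' hj'
        obtain ⟨hprim, hinv, -, -⟩ := hRNF.2.2.2.1 l hl ha hb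
        obtain ⟨hda, hdb⟩ := mem_R_dvd hRNF ht hl ha hb
        have key : ∀ c : ℤ, (k (⟨2 * l, ha⟩ : Fin d) : ℤ) ∣ c →
            Q ⟨2 * l + 1, hb⟩ ⟨2 * l, ha⟩ ^ c = 1 := by
          intro c hc
          rw [hinv, inv_zpow, inv_eq_one]
          exact (hprim.zpow_eq_one_iff_dvd c).2 hc
        first
        | exact key _ (Dvd.dvd.mul_right hdb _)
        | exact key _ (Dvd.dvd.mul_left hda _)
    · rfl

end rnf

section coc

variable {γ : Fin d → ℂ} {α : g d →ₗ[ℂ] g d →ₗ[ℂ] ℂ}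

lemma ip_add (γ : Fin d → ℂ) (m n : Fin d → ℤ) :
    ip d γ (m + n) = ip d γ m + ip d γ n := by
  simp only [ip, ← Finset.sum_add_distrib]
  refine Finset.sum_congr rfl fun i _ => ?_
  push_cast [Pi.add_apply]
  ring

lemma ip_neg (γ : Fin d → ℂ) (m : Fin d → ℤ) : ip d γ (-m) = - ip d γ m := by
  simp only [ip, ← Finset.sum_neg_distrib]
  refine Finset.sum_congr rfl fun i _ => ?_
  push_cast [Pi.neg_apply]
  ring

lemma ip_ne_zero (hγ : Generic d γ) {m : Fin d → ℤ} (hm : m ≠ 0) :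
    ip d γ m ≠ 0 := by
  intro h
  apply hm
  have h2 : ∑ i : Fin d, ((m i : ℚ) • γ i) = 0 := by
    rw [← h]
    refine Finset.sum_congr rfl fun i _ => ?_
    rw [Rat.smul_def]
    push_cast
    ring
  have := Fintype.linearIndependent_iff.1 hγ (fun i => (m i : ℚ)) h2
  funext i
  have h3 : (m i : ℚ) = 0 := this i
  have h4 : m i = 0 := by exact_mod_cast h3
  simpa using h4

lemma br_single (Q : Matrix (Fin d) (Fin d) ℂ) (γ : Fin d → ℂ) (m n : Fin d → ℤ) :
    br d Q γ (L d m) (L d n) = sc d Q γ m n • L d (m + n) := by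
  unfold br L
  rw [Finsupp.sum_single_index, Finsupp.sum_single_index]
  · rw [Finsupp.smul_single, smul_eq_mul, mul_comm, mul_one]
  · rw [one_mul, zero_mul, Finsupp.single_zero]
  · rw [Finsupp.sum_single_index] <;> simp

lemma cocyc (hα : IsCocycle d Q γ α) (m n p : Fin d → ℤ) :
    sc d Q γ m n * α (L d (m + n)) (L d p) + sc d Q γ p m * α (L d (p + m)) (L d n)
      + sc d Q γ n p * α (L d (n + p)) (L d m) = 0 := by
  have h := hα.2 (L d m) (L d n) (L d p)
  rw [br_single, br_single, br_single] at h
  simpa using h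

lemma anti (hα : IsCocycle d Q γ α) (m n : Fin d → ℤ) :
    α (L d n) (L d m) = - α (L d m) (L d n) := hα.1 _ _

end coc

section moves

variable {z : ℕ} {k : Fin d → ℕ} {γ : Fin d → ℂ} {α : g d →ₗ[ℂ] g d →ₗ[ℂ] ℂ}

lemma qsigma_R_left (hQ0 : ∀ i j, Q i j ≠ 0) (hRNF : IsRNF d Q z k)
    {t : Fin d → ℤ} (ht : t ∈ Rset d Q) (m n : Fin d → ℤ) :
    qsigma d Q (m + t) n = qsigma d Q m n := by
  rw [qsigma_add_left hQ0, (R_sigma_one hRNF ht n).1, mul_one]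

lemma qsigma_R_right (hQ0 : ∀ i j, Q i j ≠ 0) (hRNF : IsRNF d Q z k)
    {t : Fin d → ℤ} (ht : t ∈ Rset d Q) (m n : Fin d → ℤ) :
    qsigma d Q m (n + t) = qsigma d Q m n := by
  rw [qsigma_add_right hQ0, (R_sigma_one hRNF ht m).2, mul_one]

lemma sigma_shift (hQ0 : ∀ i j, Q i j ≠ 0) (hRNF : IsRNF d Q z k)
    {t : Fin d → ℤ} (ht : t ∈ Rset d Q) (r : Fin d → ℤ) :
    qsigma d Q (r + t) (-(r + t)) = qsigma d Q r (-r) := by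
  have e1 : -(r + t) = -r + -t := by abel
  rw [e1, qsigma_R_left hQ0 hRNF ht, qsigma_R_right hQ0 hRNF (Rset_neg hQ0 ht)]

lemma moveA (hQ0 : ∀ i j, Q i j ≠ 0) (hRNF : IsRNF d Q z k) (hα : IsCocycle d Q γ α)
    {r t : Fin d → ℤ} (hr : r ∉ Rset d Q) (ht : t ∈ Rset d Q) :
    ip d γ r * α (L d (r + t)) (L d (-(r + t))) =
      ip d γ (r + t) * α (L d r) (L d (-r)) := by
  have hrt : r + t ∉ Rset d Q := not_mem_add hQ0 hr ht
  have hnrt : -(r + t) ∉ Rset d Q := fun hh => hrt (by simpa using Rset_neg hQ0 hh)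
  have h := cocyc hα r t (-(r + t))
  have e1 : -(r + t) + r = -t := by abel
  have e2 : t + -(r + t) = -r := by abel
  rw [e1, e2] at h
  have s1 : sc d Q γ r t = -(ip d γ r) := by
    rw [sc, if_neg hr, if_pos ht, (R_sigma_one hRNF ht r).1, one_mul]
  have s2 : sc d Q γ (-(r + t)) r = 0 := by
    rw [sc, if_neg hnrt, if_neg hr]
    rw [qsigma_neg_left hQ0, qsigma_neg_right hQ0, qsigma_add_left hQ0,
      qsigma_add_right hQ0, (R_sigma_one hRNF ht r).1, (R_sigma_one hRNF ht r).2]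
    ring
  have s3 : sc d Q γ t (-(r + t)) = -(ip d γ (r + t)) := by
    rw [sc, if_pos ht, if_neg hnrt, (R_sigma_one hRNF ht _).1, one_mul, ip_neg]
  rw [s1, s2, s3, anti hα r (-r)] at h
  linear_combination -h

lemma moveB (hd1 : 1 < d) (hQ0 : ∀ i j, Q i j ≠ 0) (hRNF : IsRNF d Q z k)
    (hγ : Generic d γ) (hα : IsCocycle d Q γ α) {r s : Fin d → ℤ}
    (hr : r ∉ Rset d Q) (hs : s ∉ Rset d Q)
    (hne : qsigma d Q r s ≠ qsigma d Q s r) :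
    α (L d (r + s)) (L d (-(r + s))) * ip d γ r * qsigma d Q r (-r)
      = α (L d r) (L d (-r)) * ip d γ (r + s) * qsigma d Q (r + s) (-(r + s)) := by
  have hz : 0 < z := hRNF.1
  have h0 : 0 < d := by omega
  have h1 : 1 < d := hd1
  -- the element t = k₁ e₁ of R
  set i0 : Fin d := ⟨0, h0⟩ with hi0
  set i1 : Fin d := ⟨1, h1⟩ with hi1
  obtain ⟨hprim, hinv, hkeq, hk1⟩ := hRNF.2.2.2.1 0 hz h0 h1
  set t : Fin d → ℤ := Pi.single i0 ((k i0 : ℤ)) with htdef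
  have hQ10 : ∀ c : ℤ, Q i1 i0 ^ c = 1 ↔ (k i0 : ℤ) ∣ c := by
    intro c
    rw [show Q i1 i0 = Q (⟨2*0+1, h1⟩ : Fin d) (⟨2*0, h0⟩ : Fin d) from rfl, hinv,
      inv_zpow, inv_eq_one]
    exact hprim.zpow_eq_one_iff_dvd c
  have ht : t ∈ Rset d Q := by
    intro n
    rw [show (qsigma d Q t n : ℂ) = 1 from qsigma_left_a hRNF hz h0 n _,
      show (qsigma d Q n t : ℂ) = Q i1 i0 ^ (n i1 * (k i0 : ℤ)) from
        qsigma_right_a hRNF hz h0 h1 n _]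
    exact ((hQ10 _).2 (dvd_mul_left _ _)).symm
  have htne : t ≠ 0 := by
    intro hh
    have := congrFun hh i0
    rw [htdef, Pi.single_eq_same, Pi.zero_apply] at this
    have hk1' : 1 < k i0 := hk1
    omega
  have hτ : ip d γ t ≠ 0 := ip_ne_zero hγ htne
  -- r + s ∉ R
  have hrs : r + s ∉ Rset d Q := by
    intro hu
    apply hne
    have e1 : r = (r + s) + -s := by abel
    rw [e1, qsigma_add_left hQ0, qsigma_add_right hQ0, (R_sigma_one hRNF hu s).1,
      (R_sigma_one hRNF hu s).2, one_mul, one_mul, qsigma_neg_left hQ0,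
      qsigma_neg_right hQ0]
  have hnrs : -(r + s) ∉ Rset d Q := fun hh => hrs (by simpa using Rset_neg hQ0 hh)
  have hrt : r + t ∉ Rset d Q := not_mem_add hQ0 hr ht
  -- abbreviations
  set A := α (L d (r + s)) (L d (-(r + s))) with hA
  set B := α (L d r) (L d (-r)) with hB
  set D := qsigma d Q r s - qsigma d Q s r with hD
  set K1 := qsigma d Q (-(r + s)) r - qsigma d Q r (-(r + s)) with hK1
  set K2 := qsigma d Q s (-(r + s)) - qsigma d Q (-(r + s)) s with hK2
  -- first cocycle identity
  have E1 : D * A + K1 * (- α (L d s) (L d (-s))) + K2 * (- B) = 0 := by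
    have h := cocyc hα r s (-(r + s))
    have e1 : -(r + s) + r = -s := by abel
    have e2 : s + -(r + s) = -r := by abel
    rw [e1, e2, sc, if_neg hr, if_neg hs, sc, if_neg hnrs, if_neg hr, sc,
      if_neg hs, if_neg hnrs, anti hα s (-s), anti hα r (-r)] at h
    linear_combination h
  -- second cocycle identity at r + t
  have E2 : D * α (L d ((r + s) + t)) (L d (-((r + s) + t)))
      + K1 * (- α (L d s) (L d (-s)))
      + K2 * (- α (L d (r + t)) (L d (-(r + t)))) = 0 := by
    have h := cocyc hα (r + t) s (-((r + t) + s))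
    have e1 : -((r + t) + s) + (r + t) = -s := by abel
    have e2 : s + -((r + t) + s) = -(r + t) := by abel
    have hnrts : -((r + t) + s) ∉ Rset d Q := by
      intro hh
      apply hnrs
      have e3 : -(r + s) = -((r + t) + s) + t := by abel
      rw [e3]
      exact Rset_add hQ0 hh ht
    rw [e1, e2, sc, if_neg hrt, if_neg hs, sc, if_neg hnrts, if_neg hrt, sc,
      if_neg hs, if_neg hnrts, anti hα s (-s), anti hα (r + t) (-(r + t))] at h
    -- rewrite the sigma coefficients
    have c1 : qsigma d Q (r + t) s = qsigma d Q r s := qsigma_R_left hQ0 hRNF ht r s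
    have c2 : qsigma d Q s (r + t) = qsigma d Q s r := qsigma_R_right hQ0 hRNF ht s r
    have e4 : -((r + t) + s) = -(r + s) + -t := by abel
    have e5 : r + t + s = (r + s) + t := by abel
    have c3 : qsigma d Q (-((r + t) + s)) (r + t) = qsigma d Q (-(r + s)) r := by
      rw [e4, qsigma_R_left hQ0 hRNF (Rset_neg hQ0 ht),
        qsigma_R_right hQ0 hRNF ht]
    have c4 : qsigma d Q (r + t) (-((r + t) + s)) = qsigma d Q r (-(r + s)) := by
      rw [e4, qsigma_R_left hQ0 hRNF ht,
        qsigma_R_right hQ0 hRNF (Rset_neg hQ0 ht)]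
    have c5 : qsigma d Q s (-((r + t) + s)) = qsigma d Q s (-(r + s)) := by
      rw [e4, qsigma_R_right hQ0 hRNF (Rset_neg hQ0 ht)]
    have c6 : qsigma d Q (-((r + t) + s)) s = qsigma d Q (-(r + s)) s := by
      rw [e4, qsigma_R_left hQ0 hRNF (Rset_neg hQ0 ht)]
    rw [c1, c2, c3, c4, c5, c6, e5] at h
    linear_combination h
  -- moveA applications
  have A1 : ip d γ (r + s) * α (L d ((r + s) + t)) (L d (-((r + s) + t))) =
      ip d γ ((r + s) + t) * A := moveA hQ0 hRNF hα hrs ht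
  have A2 : ip d γ r * α (L d (r + t)) (L d (-(r + t))) =
      ip d γ (r + t) * B := moveA hQ0 hRNF hα hr ht
  have hipadd1 : ip d γ ((r + s) + t) = ip d γ (r + s) + ip d γ t := ip_add γ _ _
  have hipadd2 : ip d γ (r + t) = ip d γ r + ip d γ t := ip_add γ _ _
  set a := ip d γ (r + s) with ha
  set b := ip d γ r with hb
  set τ := ip d γ t with hτ'
  rw [hipadd1] at A1
  rw [hipadd2] at A2
  -- key consequence
  have hDAb : D * A * b = K2 * a * B := by
    have key : (D * A * b - K2 * a * B) * τ = 0 := by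
      linear_combination (a * b) * E2 - (a * b) * E1 - (b * D) * A1 + (a * K2) * A2
    rcases mul_eq_zero.1 key with hh | hh
    · linear_combination hh
    · exact absurd hh hτ
  -- the sigma identity  K2 * σ(r,-r) = D * σ(r+s, -(r+s))
  have hK : K2 * qsigma d Q r (-r) = D * qsigma d Q (r + s) (-(r + s)) := by
    have n1 : -(r + s) = -r + -s := by abel
    rw [hK2, hD, n1, qsigma_add_right hQ0, qsigma_add_left hQ0,
      qsigma_add_left hQ0, qsigma_add_right hQ0, qsigma_add_right hQ0]
    rw [qsigma_neg_left hQ0, qsigma_neg_left hQ0, qsigma_neg_right hQ0,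
      qsigma_neg_right hQ0, qsigma_neg_right hQ0, qsigma_neg_right hQ0]
    have z1 := qsigma_ne_zero hQ0 (Q := Q) r r
    have z2 := qsigma_ne_zero hQ0 (Q := Q) r s
    have z3 := qsigma_ne_zero hQ0 (Q := Q) s r
    have z4 := qsigma_ne_zero hQ0 (Q := Q) s s
    field_simp
  have hDne : D ≠ 0 := sub_ne_zero.2 hne
  apply mul_left_cancel₀ hDne
  calc D * (A * b * qsigma d Q r (-r)) = (D * A * b) * qsigma d Q r (-r) := by ring
    _ = (K2 * a * B) * qsigma d Q r (-r) := by rw [hDAb]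
    _ = a * B * (K2 * qsigma d Q r (-r)) := by ring
    _ = a * B * (D * qsigma d Q (r + s) (-(r + s))) := by rw [hK]
    _ = D * (B * a * qsigma d Q (r + s) (-(r + s))) := by ring

end moves

section conn

variable {z : ℕ} {k : Fin d → ℕ} {γ : Fin d → ℂ} {α : g d →ₗ[ℂ] g d →ₗ[ℂ] ℂ}

lemma left_not_mem {r s : Fin d → ℤ} (hne : qsigma d Q r s ≠ qsigma d Q s r) :
    r ∉ Rset d Q := fun hr => hne (hr s)

lemma right_not_mem (hRNF : IsRNF d Q z k) {r s : Fin d → ℤ}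
    (hne : qsigma d Q r s ≠ qsigma d Q s r) : s ∉ Rset d Q := fun hs =>
  hne (((R_sigma_one hRNF hs r).2).trans ((R_sigma_one hRNF hs r).1).symm)

theorem main_eq (hd1 : 1 < d) (hd : 0 < d) (hQ0 : ∀ i j, Q i j ≠ 0)
    {z : ℕ} {k : Fin d → ℕ} (hRNF : IsRNF d Q z k)
    (hγ : Generic d γ) (hα : IsCocycle d Q γ α) :
    ∀ m : Fin d → ℤ, m ∉ Rset d Q →
      α (L d m) (L d (-m)) =
        (ip d γ m / ip d γ (Pi.single ⟨0, hd⟩ 1)) * qsigma d Q m (-m) *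
          α (L d (Pi.single ⟨0, hd⟩ 1)) (L d (-(Pi.single ⟨0, hd⟩ 1))) := by
  have hz : 0 < z := hRNF.1
  set i0 : Fin d := ⟨0, hd⟩ with hi0
  set i1 : Fin d := ⟨1, hd1⟩ with hi1
  set e0 : Fin d → ℤ := Pi.single i0 1 with he0
  obtain ⟨hprim, hinv, hkeq, hk1⟩ := hRNF.2.2.2.1 0 hz hd hd1
  have hk1' : 1 < k i0 := hk1
  have hQ10 : ∀ c : ℤ, Q i1 i0 ^ c = 1 ↔ (k i0 : ℤ) ∣ c := by
    intro c
    rw [show Q i1 i0 = Q (⟨2*0+1, hd1⟩ : Fin d) (⟨2*0, hd⟩ : Fin d) from rfl, hinv,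
      inv_zpow, inv_eq_one]
    exact hprim.zpow_eq_one_iff_dvd c
  have sigE0 : ∀ n, qsigma d Q e0 n = 1 := fun n => qsigma_left_a hRNF hz hd n 1
  have sigNe0 : ∀ (n : Fin d → ℤ), qsigma d Q n e0 = Q i1 i0 ^ (n i1 * 1) :=
    fun n => qsigma_right_a hRNF hz hd hd1 n 1
  have sigNe1 : ∀ (n : Fin d → ℤ) (c : ℤ), qsigma d Q n (Pi.single i1 c) = 1 :=
    fun n c => qsigma_right_b hRNF hz hd1 n c
  have sigE1n : ∀ (n : Fin d → ℤ) (c : ℤ),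
      qsigma d Q (Pi.single i1 c) n = Q i1 i0 ^ (c * n i0) :=
    fun n c => qsigma_left_b hRNF hz hd hd1 n c
  have hkne1 : ¬ ((k i0 : ℤ) ∣ 1) := by
    intro hdd
    have : k i0 ∣ 1 := by exact_mod_cast hdd
    have := Nat.dvd_one.1 this
    omega
  -- the normalized function
  set Hf : (Fin d → ℤ) → ℂ := fun x => α (L d x) (L d (-x)) / (ip d γ x * qsigma d Q x (-x))
    with hHf
  have hnz : ∀ x : Fin d → ℤ, x ∉ Rset d Q → ip d γ x * qsigma d Q x (-x) ≠ 0 := by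
    intro x hx
    exact mul_ne_zero (ip_ne_zero hγ (fun h0 => hx (h0 ▸ Rset_zero)))
      (qsigma_ne_zero hQ0 _ _)
  have moveB' : ∀ r s : Fin d → ℤ, qsigma d Q r s ≠ qsigma d Q s r →
      Hf (r + s) = Hf r := by
    intro r s hne
    have hr := left_not_mem hne
    have hs := right_not_mem hRNF hne
    have h := moveB hd1 hQ0 hRNF hγ hα hr hs hne
    have hrs : r + s ∉ Rset d Q := by
      intro hu
      apply hne
      have e1 : r = (r + s) + -s := by abel
      rw [e1, qsigma_add_left hQ0, qsigma_add_right hQ0, (R_sigma_one hRNF hu s).1,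
        (R_sigma_one hRNF hu s).2, one_mul, one_mul, qsigma_neg_left hQ0,
        qsigma_neg_right hQ0]
    rw [hHf]
    rw [div_eq_div_iff (hnz _ hrs) (hnz _ hr)]
    linear_combination h
  -- step 1 : if k₀ ∤ x₁ then Hf x = Hf e0
  have key1 : ∀ x : Fin d → ℤ, ¬ ((k i0 : ℤ) ∣ x i1) → Hf x = Hf e0 := by
    intro x hx
    have hne : qsigma d Q x (e0 + -x) ≠ qsigma d Q (e0 + -x) x := by
      rw [qsigma_add_right hQ0, qsigma_add_left hQ0, sigE0, one_mul, sigNe0,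
        qsigma_neg_left hQ0]
      intro heq
      apply hx
      rw [← hQ10]
      have hcne : (qsigma d Q x x)⁻¹ ≠ 0 := inv_ne_zero (qsigma_ne_zero hQ0 x x)
      have h2 : qsigma d Q x (-x) = (qsigma d Q x x)⁻¹ := qsigma_neg_right hQ0 x x
      rw [h2] at heq
      have := mul_right_cancel₀ hcne (heq.trans (one_mul _).symm)
      rwa [mul_one] at this
    have h := moveB' x (e0 + -x) hne
    have e1 : x + (e0 + -x) = e0 := by abel
    rw [e1] at h
    exact h.symm
  -- main case analysis
  intro m hm
  have hHm : Hf m = Hf e0 := by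
    by_cases hdvd1 : (k i0 : ℤ) ∣ m i1
    · by_cases hdvd0 : (k i0 : ℤ) ∣ m i0
      · -- both divisible: use a witness from m ∉ R
        have hwit : ∃ n, qsigma d Q m n ≠ qsigma d Q n m := by
          by_contra hno
          push_neg at hno
          exact hm hno
        obtain ⟨n, hn⟩ := hwit
        set s : Fin d → ℤ := n + Pi.single i1 (1 - m i1 - n i1) with hs
        have hne : qsigma d Q m s ≠ qsigma d Q s m := by
          rw [hs, qsigma_add_right hQ0, qsigma_add_left hQ0, sigNe1, mul_one,
            sigE1n]
          have : Q i1 i0 ^ ((1 - m i1 - n i1) * m i0) = 1 :=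
            (hQ10 _).2 (Dvd.dvd.mul_left hdvd0 _)
          rw [this, mul_one]
          exact hn
        have h := moveB' m s hne
        have h2 : Hf (m + s) = Hf e0 := by
          apply key1
          have : (m + s) i1 = 1 := by
            rw [hs]
            simp only [Pi.add_apply, Pi.single_eq_same]
            ring
          rw [this]
          exact hkne1
        rw [← h, h2]
      · -- k ∣ m i1 but not m i0
        set s : Fin d → ℤ := Pi.single i1 (1 - m i1) with hs
        have hne : qsigma d Q m s ≠ qsigma d Q s m := by
          rw [hs, sigNe1, sigE1n]
          intro heq
          have hdd : (k i0 : ℤ) ∣ (1 - m i1) * m i0 := (hQ10 _).1 heq.symm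
          apply hdvd0
          have h3 : m i0 = (1 - m i1) * m i0 + m i1 * m i0 := by ring
          rw [h3]
          exact dvd_add hdd (Dvd.dvd.mul_right hdvd1 _)
        have h := moveB' m s hne
        have h2 : Hf (m + s) = Hf e0 := by
          apply key1
          have : (m + s) i1 = 1 := by
            rw [hs]
            simp only [Pi.add_apply, Pi.single_eq_same]
            ring
          rw [this]
          exact hkne1
        rw [← h, h2]
    · exact key1 m hdvd1
  -- convert Hf m = Hf e0 into the required formula
  have he0nR : e0 ∉ Rset d Q := by
    intro hmem
    have h := hmem (Pi.single i1 1)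
    rw [sigNe1, sigE1n] at h
    have : Q i1 i0 ^ ((1:ℤ) * e0 i0) = 1 := h.symm
    rw [he0, Pi.single_eq_same, one_mul] at this
    exact hkne1 ((hQ10 1).1 this)
  have hsig0 : qsigma d Q e0 (-e0) = 1 := sigE0 (-e0)
  rw [hHf] at hHm
  simp only at hHm
  rw [div_eq_div_iff (hnz _ hm) (hnz _ he0nR)] at hHm
  rw [hsig0, mul_one] at hHm
  have hipe0 : ip d γ e0 ≠ 0 := ip_ne_zero hγ (fun h0 => he0nR (h0 ▸ Rset_zero))
  field_simp
  linear_combination hHm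

end conn

end Aux

end QTorus

open QTorus

/-- for Q in rational normal form, γ generic, and α a normalized
2-cocycle, writing α(m) = α(L_m, L_{-m}): for every m ∉ R,
α(m) = ((γ|m)/(γ|e₁)) σ(m,−m) α(e₁). -/
theorem stmt16 (d : ℕ) (hd1 : 1 < d) (hd : 0 < d)
    (Q : Matrix (Fin d) (Fin d) ℂ) (hQ : QOk d Q)
    (z : ℕ) (k : Fin d → ℕ) (hRNF : IsRNF d Q z k)
    (γ : Fin d → ℂ) (hγ : Generic d γ)
    (α : g d →ₗ[ℂ] g d →ₗ[ℂ] ℂ) (hα : IsCocycle d Q γ α)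
    (hnorm : IsNormalized d Q k hd α) :
    ∀ m : Fin d → ℤ, m ∉ Rset d Q →
      α (L d m) (L d (-m)) =
        (ip d γ m / ip d γ (Pi.single ⟨0, hd⟩ 1)) * qsigma d Q m (-m) *
          α (L d (Pi.single ⟨0, hd⟩ 1)) (L d (-(Pi.single ⟨0, hd⟩ 1))) := by
  intro m hm
  exact main_eq hd1 hd hQ.2.2 hRNF hγ hα m hm
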